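/- Let Γ be a simple language and G = closure(Γ^∩). If α, β ∈ G with α ≻ β, then there exists γ ∈ G with γ ≠ α such that (α, γ) is an edge of E_G[G] ∪ E_H[G, ⊇] and γ ⪰ β. -/

import Mathlib

open scoped Classical

noncomputable section

/-- A predicate of arity `ar` over `D`: a set of words over `D`, all of length `ar`. -/
structure GPred (D : Type*) where
  ar : ℕ
  s : Set (List D)
  len : ∀ w ∈ s, w.length = ar

namespace GPred

variable {D : Type*}

/-- `*α`: the set of words whose suffix of length `α.ar` lies in `α`. -/
def star (α : GPred D) : Set (List D) :=
  {w | α.ar ≤ w.length ∧ w.drop (w.length - α.ar) ∈ α.s}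

/-- The operation `α | β`: restrict the longer predicate to tuples whose suffix lies
in the shorter one. -/
def bar (α β : GPred D) : GPred D :=
  if β.ar ≤ α.ar then
    ⟨α.ar, {w | w ∈ α.s ∧ w.drop (α.ar - β.ar) ∈ β.s}, fun w hw => α.len w hw.1⟩
  else
    ⟨β.ar, {w | w ∈ β.s ∧ w.drop (β.ar - α.ar) ∈ α.s}, fun w hw => β.len w hw.1⟩

/-- `α⁻`: drop the last coordinate. -/
def minus (α : GPred D) : GPred D :=
  ⟨α.ar - 1, {w | ∃ a : D, w ++ [a] ∈ α.s}, by
    rintro w ⟨a, ha⟩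
    have h := α.len _ ha
    simp at h
    omega⟩

/-- `α⁻ × {a}`. -/
def sufSingle (α : GPred D) (a : D) : GPred D :=
  ⟨α.ar, {w | ∃ w', (∃ b : D, w' ++ [b] ∈ α.s) ∧ w = w' ++ [a]}, by
    rintro w ⟨w', ⟨b, hb⟩, rfl⟩
    have h := α.len _ hb
    simp at h ⊢
    omega⟩

/-- Prefix projection `α_{1:i}`. -/
def prefProj (α : GPred D) (i : ℕ) : GPred D :=
  ⟨i, {w | w.length = i ∧ ∃ t, w ++ t ∈ α.s}, fun _ hw => hw.1⟩

/-- Suffix projection of length `i`, i.e. `α_{‖α‖-i+1:‖α‖}`. -/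
def sufProj (α : GPred D) (i : ℕ) : GPred D :=
  ⟨i, {w | w.length = i ∧ ∃ t, t ++ w ∈ α.s}, fun _ hw => hw.1⟩

/-- A predicate is simple if it is a cartesian product of subsets of `D`. -/
def IsSimple (α : GPred D) : Prop :=
  ∃ Ωs : List (Set D), α.ar = Ωs.length ∧ α.s = {w | List.Forall₂ (· ∈ ·) w Ωs}

/-- `α ≥ β` iff `*α ⊇ *β`. -/
def pge (α β : GPred D) : Prop := β.star ⊆ α.star

/-- `α > β`. -/
def pgt (α β : GPred D) : Prop := pge α β ∧ α ≠ β

/-- `β ⊊ α`: strict inclusion of predicates of equal arity. -/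
def pssub (β α : GPred D) : Prop := β.ar = α.ar ∧ β.s ⊂ α.s

/-- `α ≻ β` iff `‖β‖ > ‖α‖` and the suffix projection `β_{‖β‖-‖α‖+1:‖β‖} ⊆ α`. -/
def psucc (α β : GPred D) : Prop := α.ar < β.ar ∧ (β.sufProj α.ar).s ⊆ α.s

/-- `α ⪰ β`. -/
def psucceq (α β : GPred D) : Prop := psucc α β ∨ α = β

def PrefClosed (G : Set (GPred D)) : Prop := ∀ ρ ∈ G, 1 ≤ ρ.ar → ρ.minus ∈ G

def InterClosed (G : Set (GPred D)) : Prop := ∀ α ∈ G, ∀ β ∈ G, α.bar β ∈ G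

def SSClosed (G : Set (GPred D)) : Prop := ∀ ρ ∈ G, 1 ≤ ρ.ar → ∀ a : D, ρ.sufSingle a ∈ G

/-- `closure(Γ^∩)`: the smallest prefix- and intersection-closed superset of `Γ`. -/
def piClosure (Γ : Set (GPred D)) : Set (GPred D) :=
  ⋂₀ {G | Γ ⊆ G ∧ PrefClosed G ∧ InterClosed G}

/-- `Γ*`: the smallest prefix-, intersection- and singleton-suffix-closed superset of `Γ`. -/
def fullClosure (Γ : Set (GPred D)) : Set (GPred D) :=
  ⋂₀ {G | Γ ⊆ G ∧ PrefClosed G ∧ InterClosed G ∧ SSClosed G}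

/-- `Γ°`: the singleton suffix closure `Γ ∪ {ρ⁻ × {a} : ρ ∈ Γ, a ∈ D}`. -/
def sscSet (Γ : Set (GPred D)) : Set (GPred D) :=
  Γ ∪ {σ | ∃ ρ ∈ Γ, 1 ≤ ρ.ar ∧ ∃ a : D, σ = ρ.sufSingle a}

/-- Edges of the Hasse diagram of `(G, ≥)`. -/
def HasseGe (G : Set (GPred D)) (α β : GPred D) : Prop :=
  α ∈ G ∧ β ∈ G ∧ pgt α β ∧ ¬ ∃ γ ∈ G, pgt α γ ∧ pgt γ β

/-- Edges of the Hasse diagram of `(G, ⊇)`. -/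
def HasseSub (G : Set (GPred D)) (α β : GPred D) : Prop :=
  α ∈ G ∧ β ∈ G ∧ pssub β α ∧ ¬ ∃ γ ∈ G, pssub γ α ∧ pssub β γ

/-- Edges of the graph `G[G]`. -/
def EdgeG (G : Set (GPred D)) (α β : GPred D) : Prop :=
  α ∈ G ∧ β ∈ G ∧ psucc α β ∧
    ¬ ∃ γ ∈ G, (psucc α γ ∧ psucc γ β) ∨ (pssub γ α ∧ psucc γ β)

/-- `X_s(α; G)`. -/
def X (s : ℕ) (α : GPred D) (G : Set (GPred D)) : Set (List D) :=
  {x | x.length = s ∧ x ∈ α.star ∧ ∀ β ∈ G, pgt α β → x ∉ β.star}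

/-- `X_s(α)`. -/
def Xall (s : ℕ) (α : GPred D) : Set (List D) :=
  {x | x.length = s ∧ x ∈ α.star}

/-- Projection of `α` onto its last coordinate. -/
def projLast (α : GPred D) : Set D := {a | ∃ w, w ++ [a] ∈ α.s}

/-- The cartesian-product predicate `Ω₁ × ⋯ × Ω_l`. -/
def predOfList (Ωs : List (Set D)) : GPred D :=
  ⟨Ωs.length, {w | List.Forall₂ (· ∈ ·) w Ωs}, fun _ hw => List.Forall₂.length_eq hw⟩

end GPred

section Aux

open GPred

variable {D : Type*}

lemma GPred.ext' {α β : GPred D} (h1 : α.ar = β.ar) (h2 : α.s = β.s) : α = β := by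
  cases α; cases β; simp_all

lemma psucc_trans' {δ γ β : GPred D} (h1 : psucc δ γ) (h2 : psucc γ β) : psucc δ β := by
  refine ⟨h1.1.trans h2.1, ?_⟩
  rintro w ⟨hwlen, t, ht⟩
  have h11 : δ.ar < γ.ar := h1.1
  have h21 : γ.ar < β.ar := h2.1
  have hL : (t ++ w).length = β.ar := β.len _ ht
  have hL' : (t ++ w).length = t.length + w.length := List.length_append
  have hlen : γ.ar ≤ (t ++ w).length := by omega
  set v := (t ++ w).drop ((t ++ w).length - γ.ar) with hv
  have hvlen : v.length = γ.ar := by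
    rw [hv, List.length_drop]; omega
  have hvγ : v ∈ γ.s := by
    apply h2.2
    refine ⟨hvlen, (t ++ w).take ((t ++ w).length - γ.ar), ?_⟩
    rw [List.take_append_drop]; exact ht
  apply h1.2
  refine ⟨hwlen, v.take (γ.ar - δ.ar), ?_⟩
  have hw : v.drop (γ.ar - δ.ar) = w := by
    rw [hv, List.drop_drop]
    have heq : (t ++ w).length - γ.ar + (γ.ar - δ.ar) = t.length := by omega
    have heq' : γ.ar - δ.ar + ((t ++ w).length - γ.ar) = t.length := by omega
    first
      | (rw [heq]; exact List.drop_left)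
      | (rw [heq']; exact List.drop_left _ _)
  have := List.take_append_drop (γ.ar - δ.ar) v
  rw [hw] at this
  rw [this]; exact hvγ

lemma psucc_of_sub {δ γ β : GPred D} (h1 : γ.ar = δ.ar) (h2 : γ.s ⊆ δ.s)
    (h3 : psucc γ β) : psucc δ β :=
  ⟨h1 ▸ h3.1, by rw [← h1]; exact fun w hw => h2 (h3.2 hw)⟩

lemma piClosure_finite [Fintype D] (Γ : Set (GPred D)) (hfin : Γ.Finite) :
    (piClosure Γ).Finite := by
  classical
  obtain ⟨N, hN⟩ : ∃ N, ∀ ρ ∈ Γ, ρ.ar ≤ N := by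
    refine ⟨hfin.toFinset.sup GPred.ar, fun ρ hρ => ?_⟩
    exact Finset.le_sup (hfin.mem_toFinset.mpr hρ)
  set H : Set (GPred D) := {ρ | ρ.ar ≤ N} with hH
  have hsub : piClosure Γ ⊆ H := by
    apply Set.sInter_subset_of_mem
    refine ⟨hN, ?_, ?_⟩
    · intro ρ hρ _
      simp only [hH, Set.mem_setOf_eq, GPred.minus] at *
      omega
    · intro a ha b hb
      simp only [hH, Set.mem_setOf_eq, GPred.bar] at *
      split <;> simp <;> omega
  have hHfin : H.Finite := by
    have hT : (Set.Iic N ×ˢ {t : Set (List D) | t ⊆ {w : List D | w.length ≤ N}}).Finite :=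
      (Set.finite_Iic N).prod ((List.finite_length_le D N).finite_subsets)
    have himg : (fun ρ : GPred D => (ρ.ar, ρ.s)) '' H ⊆
        Set.Iic N ×ˢ {t : Set (List D) | t ⊆ {w : List D | w.length ≤ N}} := by
      rintro p ⟨ρ, hρ, rfl⟩
      refine ⟨hρ, fun w hw => ?_⟩
      have hρ' : ρ.ar ≤ N := hρ
      have := ρ.len w hw
      simp only [Set.mem_setOf_eq]
      omega
    exact Set.Finite.of_finite_image (hT.subset himg)
      (fun a _ b _ hab => GPred.ext' (congrArg Prod.fst hab) (congrArg Prod.snd hab))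
  exact hHfin.subset hsub

end Aux

open GPred in
/-- if `α ≻ β` in `G = closure(Γ^∩)` (`Γ` simple), there is `γ ∈ G`,
`γ ≠ α`, with `(α,γ) ∈ E_G[G] ∪ E_H[G,⊇]` and `γ ⪰ β`. -/
theorem exists_intermediate_edge {D : Type*} [Fintype D] (Γ : Set (GPred D))
    (hfin : Γ.Finite) (hsimp : ∀ ρ ∈ Γ, ρ.IsSimple)
    (α β : GPred D) (hα : α ∈ piClosure Γ) (hβ : β ∈ piClosure Γ) (h : psucc α β) :
    ∃ γ ∈ piClosure Γ, γ ≠ α ∧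
      (EdgeG (piClosure Γ) α γ ∨ HasseSub (piClosure Γ) α γ) ∧ psucceq γ β := by
  have hGfin : (piClosure Γ).Finite := piClosure_finite Γ hfin
  by_cases hex : ∃ γ ∈ piClosure Γ, pssub γ α ∧ psucc γ β
  · -- Hasse (⊇) branch
    set C : Set (GPred D) := {γ ∈ piClosure Γ | pssub γ α ∧ psucc γ β} with hC
    have hCfin : C.Finite := hGfin.subset (fun x hx => hx.1)
    have hCne : C.Nonempty := by
      obtain ⟨γ, h1, h2, h3⟩ := hex; exact ⟨γ, h1, h2, h3⟩
    obtain ⟨γ, hγC, hmax⟩ := Set.Finite.exists_maximalFor GPred.s C hCfin hCne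
    obtain ⟨hγG, hγsub, hγβ⟩ := hγC
    refine ⟨γ, hγG, ?_, Or.inr ⟨hα, hγG, hγsub, ?_⟩, Or.inl hγβ⟩
    · rintro rfl; exact hγsub.2.2 (subset_refl _)
    · rintro ⟨δ, hδG, hδα, hγδ⟩
      have hδC : δ ∈ C :=
        ⟨hδG, hδα, psucc_of_sub hγδ.1 hγδ.2.1 hγβ⟩
      have := hmax (j := δ) hδC hγδ.2.1
      exact hγδ.2.2 this.ge
  · -- E_G branch
    set C : Set (GPred D) := {γ ∈ piClosure Γ | psucc α γ ∧ psucceq γ β} with hC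
    have hCfin : C.Finite := hGfin.subset (fun x hx => hx.1)
    have hCne : C.Nonempty := ⟨β, hβ, h, Or.inr rfl⟩
    obtain ⟨γ, hγC, hmin⟩ := Set.Finite.exists_minimalFor GPred.ar C hCfin hCne
    obtain ⟨hγG, hαγ, hγβ⟩ := hγC
    refine ⟨γ, hγG, ?_, Or.inl ⟨hα, hγG, hαγ, ?_⟩, hγβ⟩
    · rintro rfl; exact lt_irrefl _ hαγ.1
    · rintro ⟨δ, hδG, hcase⟩
      have hδβ : psucc δ β := by
        rcases hγβ with hγβ | rfl
        · rcases hcase with ⟨_, h2⟩ | ⟨_, h2⟩ <;> exact psucc_trans' h2 hγβ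
        · rcases hcase with ⟨_, h2⟩ | ⟨_, h2⟩ <;> exact h2
      rcases hcase with ⟨h1, h2⟩ | ⟨h1, h2⟩
      · have hδC : δ ∈ C := ⟨hδG, h1, Or.inl hδβ⟩
        have heq := hmin (j := δ) hδC (le_of_lt h2.1)
        have hlt : δ.ar < γ.ar := h2.1
        omega
      · exact hex ⟨δ, hδG, h1, hδβ⟩
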